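/- Let ν ∈ ℤ_{≥0}^n and define γ_ν = ∏_{i<j} (h̊_{ij} − ν_j)^{↑(ν_i+1)} / (h̊_{ij})^{↑(ν_i+1)} as a rational function in independent variables h̊_1,…,h̊_n with h̊_{ij} = h̊_i − h̊_j. Let q̌_i act on rational functions by swapping h̊_i and h̊_{i+1}. Then q̌_i(γ_ν) = γ_{s_iν} · (h̊_{i,i+1} + ν_{i+1})^{↓(ν_i+1)}/(h̊_{i,i+1})^{↓(ν_i+1)} · (h̊_{i,i+1})^{↑(ν_{i+1}+1)}/((h̊_{i,i+1} − ν_i))^{↑(ν_{i+1}+1)}, where s_iν swaps ν_i and ν_{i+1}, x^{↑a} = x(x+1)⋯(x+a−1), x^{↓a} = x(x−1)⋯(x−a+1). -/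

import Mathlib

noncomputable section

/-- The field `ℚ(h̊_1, …, h̊_n)` of rational functions. -/
abbrev HField (n : ℕ) := FractionRing (MvPolynomial (Fin n) ℚ)

/-- The generator `h̊_i` inside `ℚ(h̊_1, …, h̊_n)`. -/
def hgen (n : ℕ) (i : Fin n) : HField n :=
  algebraMap (MvPolynomial (Fin n) ℚ) (HField n) (MvPolynomial.X i)

/-- Rising Pochhammer symbol `x^{↑a} = x(x+1)⋯(x+a−1)`. -/
def pochUp {F : Type*} [Field F] (x : F) (a : ℕ) : F :=
  ∏ k ∈ Finset.range a, (x + (k : F))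

/-- Falling Pochhammer symbol `x^{↓a} = x(x−1)⋯(x−a+1)`. -/
def pochDown {F : Type*} [Field F] (x : F) (a : ℕ) : F :=
  ∏ k ∈ Finset.range a, (x - (k : F))

/-- `γ_ν = ∏_{i<j} (h̊_{ij} − ν_j)^{↑(ν_i+1)}/(h̊_{ij})^{↑(ν_i+1)}`, computed with
a given choice of the variables `h`. -/
def gammaNu (n : ℕ) (h : Fin n → HField n) (ν : Fin n → ℕ) : HField n :=
  ∏ p ∈ Finset.univ.filter (fun p : Fin n × Fin n => p.1 < p.2),
    pochUp (h p.1 - h p.2 - (ν p.2 : HField n)) (ν p.1 + 1) /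
      pochUp (h p.1 - h p.2) (ν p.1 + 1)

lemma pochUp_neg {F : Type*} [Field F] (x : F) (a : ℕ) :
    pochUp (-x) a = (-1 : F) ^ a * pochDown x a := by
  unfold pochUp pochDown
  have h : (-1 : F) ^ a = ∏ _k ∈ Finset.range a, (-1 : F) := by simp
  rw [h, ← Finset.prod_mul_distrib]
  exact Finset.prod_congr rfl (fun k _ => by ring)

lemma hgen_sub_ne (n : ℕ) {i j : Fin n} (hne : i ≠ j) (z : ℤ) :
    hgen n i - hgen n j + (z : HField n) ≠ 0 := by
  have key : (MvPolynomial.X i - MvPolynomial.X j + (z : MvPolynomial (Fin n) ℚ)) ≠ 0 := by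
    intro h
    have := congrArg (MvPolynomial.eval (fun t => if t = i then (1 - z : ℚ) else 0)) h
    simp [hne.symm, sub_add_cancel] at this
  intro h
  apply key
  apply IsFractionRing.injective (MvPolynomial (Fin n) ℚ) (HField n)
  rw [map_add, map_sub, map_intCast, map_zero]
  exact h

lemma cancel_aux {F : Type*} [Field F] (D u v : F) (hu : u ≠ 0) (hv : v ≠ 0) :
    D = u / v * D * (v / u) := by
  field_simp

lemma pochUp_ne_zero (n : ℕ) {i j : Fin n} (hne : i ≠ j) (z : ℤ) (a : ℕ) :
    pochUp (hgen n i - hgen n j + (z : HField n)) a ≠ 0 := by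
  unfold pochUp
  apply Finset.prod_ne_zero_iff.2
  intro k _
  have := hgen_sub_ne n hne (z + k)
  push_cast at this ⊢
  convert this using 1
  ring


/-- covariance of `γ_ν` under the Zhelobenko substitution `q̌_i`
(swap of `h̊_i ↔ h̊_{i+1}`):
`q̌_i(γ_ν) = γ_{s_iν} · (h̊_{i,i+1}+ν_{i+1})^{↓(ν_i+1)}/(h̊_{i,i+1})^{↓(ν_i+1)} ·
(h̊_{i,i+1})^{↑(ν_{i+1}+1)}/(h̊_{i,i+1}−ν_i)^{↑(ν_{i+1}+1)}`. -/
theorem gamma_covariance (n : ℕ) (ν : Fin n → ℕ)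
    (i j : Fin n) (hij : (j : ℕ) = (i : ℕ) + 1) :
    gammaNu n (hgen n ∘ (Equiv.swap i j)) ν =
      gammaNu n (hgen n) (ν ∘ (Equiv.swap i j)) *
        (pochDown (hgen n i - hgen n j + (ν j : HField n)) (ν i + 1) /
          pochDown (hgen n i - hgen n j) (ν i + 1)) *
        (pochUp (hgen n i - hgen n j) (ν j + 1) /
          pochUp (hgen n i - hgen n j - (ν i : HField n)) (ν j + 1)) := by
  have hlt : i < j := by rw [Fin.lt_def]; omega
  have hne : i ≠ j := Fin.ne_of_lt hlt
  set σ := Equiv.swap i j with hσ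
  have val_swap : ∀ a : Fin n,
      ((σ a : Fin n) : ℕ) = if (a : ℕ) = (i : ℕ) then (j : ℕ)
        else if (a : ℕ) = (j : ℕ) then (i : ℕ) else (a : ℕ) := by
    intro a
    rcases eq_or_ne a i with rfl | h1
    · simp [hσ]
    · rcases eq_or_ne a j with rfl | h2
      · rw [hσ, Equiv.swap_apply_right, if_neg (by omega), if_pos rfl]
      · rw [hσ, Equiv.swap_apply_of_ne_of_ne h1 h2,
          if_neg (by simpa using Fin.val_ne_of_ne h1),
          if_neg (by simpa using Fin.val_ne_of_ne h2)]
  have swap_lt : ∀ a b : Fin n, a < b → ¬(a = i ∧ b = j) → σ a < σ b := by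
    intro a b hab hnab
    rw [not_and_or] at hnab
    have h1 : (a : ℕ) ≠ (i : ℕ) ∨ (b : ℕ) ≠ (j : ℕ) := by
      rcases hnab with h | h
      · exact Or.inl (fun hh => h (Fin.ext hh))
      · exact Or.inr (fun hh => h (Fin.ext hh))
    rw [Fin.lt_def] at hab ⊢
    rw [val_swap, val_swap]
    split_ifs <;> omega
  set S := Finset.univ.filter (fun p : Fin n × Fin n => p.1 < p.2) with hS
  have hmem : (i, j) ∈ S := by simp [hS, hlt]
  set x := hgen n i - hgen n j with hx
  rw [gammaNu, gammaNu, ← Finset.mul_prod_erase _ _ hmem, ← Finset.mul_prod_erase _ _ hmem]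
  have hprod :
      (∏ p ∈ S.erase (i, j),
        pochUp ((hgen n ∘ σ) p.1 - (hgen n ∘ σ) p.2 - (ν p.2 : HField n)) (ν p.1 + 1) /
          pochUp ((hgen n ∘ σ) p.1 - (hgen n ∘ σ) p.2) (ν p.1 + 1)) =
      (∏ p ∈ S.erase (i, j),
        pochUp (hgen n p.1 - hgen n p.2 - ((ν ∘ σ) p.2 : HField n)) ((ν ∘ σ) p.1 + 1) /
          pochUp (hgen n p.1 - hgen n p.2) ((ν ∘ σ) p.1 + 1)) := by
    apply Finset.prod_nbij' (fun p => (σ p.1, σ p.2)) (fun p => (σ p.1, σ p.2))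
    · intro p hp
      rw [Finset.mem_erase] at hp ⊢
      obtain ⟨hpne, hpS⟩ := hp
      rw [hS, Finset.mem_filter] at hpS ⊢
      have hnab : ¬(p.1 = i ∧ p.2 = j) := by
        intro ⟨h1, h2⟩; exact hpne (Prod.ext h1 h2)
      refine ⟨?_, Finset.mem_univ _, swap_lt _ _ hpS.2 hnab⟩
      intro hcon
      have h1 : σ p.1 = i := congrArg Prod.fst hcon
      have h2 : σ p.2 = j := congrArg Prod.snd hcon
      have : p.1 = j := by
        have := congrArg σ h1; simpa [hσ, Equiv.swap_apply_self] using this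
      have : p.2 = i := by
        have := congrArg σ h2; simpa [hσ, Equiv.swap_apply_self] using this
      have hlt2 := hpS.2
      rw [‹p.1 = j›, ‹p.2 = i›] at hlt2
      exact absurd hlt2 (not_lt.2 (le_of_lt hlt))
    · intro p hp
      rw [Finset.mem_erase] at hp ⊢
      obtain ⟨hpne, hpS⟩ := hp
      rw [hS, Finset.mem_filter] at hpS ⊢
      have hnab : ¬(p.1 = i ∧ p.2 = j) := by
        intro ⟨h1, h2⟩; exact hpne (Prod.ext h1 h2)
      refine ⟨?_, Finset.mem_univ _, swap_lt _ _ hpS.2 hnab⟩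
      intro hcon
      have h1 : σ p.1 = i := congrArg Prod.fst hcon
      have h2 : σ p.2 = j := congrArg Prod.snd hcon
      have : p.1 = j := by
        have := congrArg σ h1; simpa [hσ, Equiv.swap_apply_self] using this
      have : p.2 = i := by
        have := congrArg σ h2; simpa [hσ, Equiv.swap_apply_self] using this
      have hlt2 := hpS.2
      rw [‹p.1 = j›, ‹p.2 = i›] at hlt2
      exact absurd hlt2 (not_lt.2 (le_of_lt hlt))
    · intro p _; simp [hσ, Equiv.swap_apply_self]
    · intro p _; simp [hσ, Equiv.swap_apply_self]
    · intro p _; simp [hσ, Equiv.swap_apply_self]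
  rw [hprod]
  have hcomp : ∀ a : Fin n, (hgen n ∘ σ) a = hgen n (σ a) := fun _ => rfl
  have hσi : σ i = j := Equiv.swap_apply_left i j
  have hσj : σ j = i := Equiv.swap_apply_right i j
  have key :
      pochUp ((hgen n ∘ σ) i - (hgen n ∘ σ) j - (ν j : HField n)) (ν i + 1) /
          pochUp ((hgen n ∘ σ) i - (hgen n ∘ σ) j) (ν i + 1) =
      (pochUp (hgen n i - hgen n j - ((ν ∘ σ) j : HField n)) ((ν ∘ σ) i + 1) /
          pochUp (hgen n i - hgen n j) ((ν ∘ σ) i + 1)) *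
        (pochDown (hgen n i - hgen n j + (ν j : HField n)) (ν i + 1) /
          pochDown (hgen n i - hgen n j) (ν i + 1)) *
        (pochUp (hgen n i - hgen n j) (ν j + 1) /
          pochUp (hgen n i - hgen n j - (ν i : HField n)) (ν j + 1)) := by
    rw [hcomp, hcomp, hσi, hσj]
    simp only [Function.comp_apply, hσi, hσj]
    have e1 : hgen n j - hgen n i - (ν j : HField n) = -(x + (ν j : HField n)) := by
      rw [hx]; ring
    have e2 : hgen n j - hgen n i = -x := by rw [hx]; ring
    rw [e1, e2, pochUp_neg, pochUp_neg]
    have hxne : ∀ z : ℤ, x + (z : HField n) ≠ 0 := fun z => hgen_sub_ne n hne z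
    have hu : pochUp (x - (ν i : HField n)) (ν j + 1) ≠ 0 := by
      have := pochUp_ne_zero n hne (-(ν i : ℤ)) (ν j + 1)
      push_cast at this
      convert this using 2
      rw [hx]; ring
    have hv : pochUp x (ν j + 1) ≠ 0 := by
      have := pochUp_ne_zero n hne 0 (ν j + 1)
      simpa using this
    have hm1 : ((-1 : HField n) ^ (ν i + 1)) ≠ 0 := by
      apply pow_ne_zero; norm_num
    rw [← hx]
    rw [mul_div_mul_left _ _ hm1]
    exact cancel_aux _ _ _ hu hv
  rw [key]
  ring

end
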